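/- arXiv:1707.09579 — 2 statements merged into one kernel-verified Lean document; each statement's English description precedes it below -/
import Mathlib

section
/- Let N be a tree-child network and let e be any reticulation edge of N. Then deleting e and suppressing the two resulting degree-two vertices yields again a tree-child network; that is, every SNPR− operation on a tree-child network is tree-child respecting. -/
/-!
Formalization of rooted binary phylogenetic networks (directed multigraphs with
labelled leaves), tree-child networks, and the SNPR / SNPR+ / SNPR− rearrangement
operations, following Klawitter, "The SNPR neighbourhood of tree-child networks".
-/

noncomputable section

attribute [local instance] Classical.propDecidable

/-- Raw data of a (rooted, binary) phylogenetic network on `n` taxa: a finite vertex set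
(vertices are natural numbers), a multiset of directed edges (parallel edges allowed),
a distinguished root, and an injective labelling of the leaves by `Fin n`. -/
structure RawNet (n : ℕ) where
  V : Finset ℕ
  E : Multiset (ℕ × ℕ)
  root : ℕ
  leaf : Fin n → ℕ

namespace RawNet

variable {n : ℕ}

/-- Adjacency: there is an edge from `a` to `b`. -/
def Adj (N : RawNet n) (a b : ℕ) : Prop := (a, b) ∈ N.E

/-- In-degree of a vertex (counting parallel edges). -/
def inDeg (N : RawNet n) (v : ℕ) : ℕ := (N.E.filter (fun e => e.2 = v)).card

/-- Out-degree of a vertex (counting parallel edges). -/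
def outDeg (N : RawNet n) (v : ℕ) : ℕ := (N.E.filter (fun e => e.1 = v)).card

/-- `v` is a reticulation (in-degree two). -/
def IsRet (N : RawNet n) (v : ℕ) : Prop := N.inDeg v = 2

/-- Edge `g` is a descendant of edge `e`: `g` starts at the head of `e` or at a vertex
reachable from the head of `e` by a directed path. -/
def EdgeDesc (N : RawNet n) (e g : ℕ × ℕ) : Prop :=
  g.1 = e.2 ∨ Relation.TransGen N.Adj e.2 g.1

/-- `δ(e)`: the number of descendant edges of `e`. -/
def delta (N : RawNet n) (e : ℕ × ℕ) : ℕ :=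
  (N.E.filter (fun g => N.EdgeDesc e g)).card

/-- `δ_T(e)`: the number of descendant tree edges of `e`. -/
def deltaT (N : RawNet n) (e : ℕ × ℕ) : ℕ :=
  (N.E.filter (fun g => N.EdgeDesc e g ∧ ¬ N.IsRet g.2)).card

/-- `N` is a valid rooted binary phylogenetic network: a DAG whose root has in-degree 0 and
out-degree 1, whose `n` leaves (in-degree 1, out-degree 0) are bijectively labelled, and all
of whose other vertices are inner tree vertices (in 1, out 2) or reticulations (in 2, out 1). -/
structure IsPhylo (N : RawNet n) : Prop where
  edge_mem : ∀ e ∈ N.E, e.1 ∈ N.V ∧ e.2 ∈ N.V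
  acyclic : ∀ v, ¬ Relation.TransGen N.Adj v v
  root_mem : N.root ∈ N.V
  root_in : N.inDeg N.root = 0
  root_out : N.outDeg N.root = 1
  leaf_mem : ∀ i, N.leaf i ∈ N.V
  leaf_inj : Function.Injective N.leaf
  leaf_in : ∀ i, N.inDeg (N.leaf i) = 1
  leaf_out : ∀ i, N.outDeg (N.leaf i) = 0
  classify : ∀ v ∈ N.V, v = N.root ∨ (∃ i, v = N.leaf i) ∨
    (N.inDeg v = 1 ∧ N.outDeg v = 2) ∨ (N.inDeg v = 2 ∧ N.outDeg v = 1)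

/-- Tree-child: every non-leaf vertex has a child that is a tree vertex. -/
def TreeChild (N : RawNet n) : Prop :=
  ∀ v ∈ N.V, 1 ≤ N.outDeg v → ∃ w, (v, w) ∈ N.E ∧ ¬ N.IsRet w

/-- Isomorphism of networks fixing the labelled leaves (and the root). -/
def Iso (A B : RawNet n) : Prop :=
  ∃ φ : ℕ → ℕ, Set.BijOn φ ↑A.V ↑B.V ∧
    B.E = A.E.map (fun p => (φ p.1, φ p.2)) ∧
    φ A.root = B.root ∧ ∀ i, φ (A.leaf i) = B.leaf i

/-- The network resulting from the SNPR operation that prunes the edge `(u,v)` (where `u` has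
parent edge `(a,u)` and sibling edge `(u,w)`) and regrafts it to the edge `(x,y)`, using the
fresh vertex `u''` to subdivide the regraft edge.  If the regraft edge is the parent or
sibling edge of `u`, it has become the edge `(a,w)` after suppressing `u`. -/
def snprResult (N : RawNet n) (u v a w x y u'' : ℕ) : RawNet n :=
  let E1 : Multiset (ℕ × ℕ) := (((N.E.erase (u, v)).erase (a, u)).erase (u, w)) + {(a, w)}
  let f : ℕ × ℕ := if (x, y) = (a, u) ∨ (x, y) = (u, w) then (a, w) else (x, y)
  { V := insert u'' (N.V.erase u)
    E := (E1.erase f) + {(f.1, u''), (u'', f.2), (u'', v)}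
    root := N.root
    leaf := N.leaf }

/-- The network resulting from the SNPR+ operation `(e,f)`: subdivide `f` with `u'` and `e`
with `v'` and add the edge `(u',v')`; if `e = f`, subdivide `e` twice (with `u'` the parent
of `v'`) and add the (parallel) edge `(u',v')`. -/
def snprPlusResult (N : RawNet n) (e f : ℕ × ℕ) (u' v' : ℕ) : RawNet n :=
  if e = f then
    { V := insert u' (insert v' N.V)
      E := (N.E.erase e) + {(e.1, u'), (u', v'), (u', v'), (v', e.2)}
      root := N.root
      leaf := N.leaf }
  else
    { V := insert u' (insert v' N.V)
      E := ((N.E.erase e).erase f) + {(e.1, v'), (v', e.2), (f.1, u'), (u', f.2), (u', v')}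
      root := N.root
      leaf := N.leaf }

/-- The network resulting from the SNPR− operation deleting the reticulation edge `(u,v)`
and suppressing `u` and `v`; here `(a,u)` is the parent edge of `u`, `(u,w)` the other child
edge of `u`, `(c,v)` the other parent edge of `v`, and `(v,z)` the child edge of `v`.
(If `(u,v)` is one of a pair of parallel edges, i.e. `c = u`, suppressing merges into `(a,z)`.) -/
def snprMinusResult (N : RawNet n) (u v a w c z : ℕ) : RawNet n :=
  if u = c then
    { V := (N.V.erase u).erase v
      E := ((((N.E.erase (u, v)).erase (u, v)).erase (a, u)).erase (v, z)) + {(a, z)}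
      root := N.root
      leaf := N.leaf }
  else
    { V := (N.V.erase u).erase v
      E := (((((N.E.erase (u, v)).erase (a, u)).erase (u, w)).erase (c, v)).erase (v, z))
            + {(a, w), (c, z)}
      root := N.root
      leaf := N.leaf }

/-- `(e,f)` is a tree-child respecting SNPR operation on `N` (with `f` an edge other than `e`,
which is expressed by taking `f` from `N.E.erase e` wherever this predicate is used). -/
def SNPRtcCond (N : RawNet n) (e f : ℕ × ℕ) : Prop :=
  N.inDeg e.1 = 1 ∧ ¬ N.EdgeDesc e f ∧
  ∃ a w u'', (a, e.1) ∈ N.E ∧ (e.1, w) ∈ N.E.erase e ∧ u'' ∉ N.V ∧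
    (N.snprResult e.1 e.2 a w f.1 f.2 u'').TreeChild

/-- The number of tree-child respecting SNPR operations on `N`
(operations are pairs of edges, counted with multiplicity). -/
def numSNPRtc (N : RawNet n) : ℕ :=
  (N.E.map (fun e => ((N.E.erase e).filter (fun f => N.SNPRtcCond e f)).card)).sum

/-- `(e,f)` is a trivial tree-child respecting SNPR operation on `N`. -/
def SNPRtrivCond (N : RawNet n) (e f : ℕ × ℕ) : Prop :=
  N.inDeg e.1 = 1 ∧ ¬ N.EdgeDesc e f ∧
  ∃ a w u'', (a, e.1) ∈ N.E ∧ (e.1, w) ∈ N.E.erase e ∧ u'' ∉ N.V ∧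
    (N.snprResult e.1 e.2 a w f.1 f.2 u'').TreeChild ∧
    (N.snprResult e.1 e.2 a w f.1 f.2 u'').Iso N

/-- The number of trivial tree-child respecting SNPR operations on `N`. -/
def numSNPRtcTrivial (N : RawNet n) : ℕ :=
  (N.E.map (fun e => ((N.E.erase e).filter (fun f => N.SNPRtrivCond e f)).card)).sum

/-- `(e,f)` is a tree-child respecting SNPR+ operation on `N`. -/
def SNPRplusTcCond (N : RawNet n) (e f : ℕ × ℕ) : Prop :=
  ¬ N.IsRet e.1 ∧ ¬ N.EdgeDesc e f ∧
  ∃ u' v', u' ∉ N.V ∧ v' ∉ N.V ∧ u' ≠ v' ∧ (N.snprPlusResult e f u' v').TreeChild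

/-- The number of tree-child respecting SNPR+ operations on `N`. -/
def numSNPRplusTc (N : RawNet n) : ℕ :=
  (N.E.map (fun e => (N.E.filter (fun f => N.SNPRplusTcCond e f)).card)).sum

/-- `e` induces a tree-child respecting SNPR− operation on `N`. -/
def SNPRminusTcCond (N : RawNet n) (e : ℕ × ℕ) : Prop :=
  N.IsRet e.2 ∧ ¬ N.IsRet e.1 ∧
  ∃ a w c z, (a, e.1) ∈ N.E ∧ (e.1, w) ∈ N.E.erase e ∧ (c, e.2) ∈ N.E.erase e ∧
    (e.2, z) ∈ N.E ∧ (N.snprMinusResult e.1 e.2 a w c z).TreeChild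

/-- The number of tree-child respecting SNPR− operations on `N`. -/
def numSNPRminusTc (N : RawNet n) : ℕ :=
  (N.E.filter (fun e => N.SNPRminusTcCond e)).card

/-- `M` is the (concrete) result of applying one SNPR operation to `N`. -/
def IsSNPRres (N M : RawNet n) : Prop :=
  ∃ e f a w u'', e ∈ N.E ∧ f ∈ N.E.erase e ∧ N.inDeg e.1 = 1 ∧ ¬ N.EdgeDesc e f ∧
    (a, e.1) ∈ N.E ∧ (e.1, w) ∈ N.E.erase e ∧ u'' ∉ N.V ∧
    M = N.snprResult e.1 e.2 a w f.1 f.2 u''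

/-- `M` is the (concrete) result of applying one SNPR+ operation to `N`. -/
def IsSNPRplusRes (N M : RawNet n) : Prop :=
  ∃ e f u' v', e ∈ N.E ∧ f ∈ N.E ∧ ¬ N.IsRet e.1 ∧ ¬ N.EdgeDesc e f ∧
    u' ∉ N.V ∧ v' ∉ N.V ∧ u' ≠ v' ∧ M = N.snprPlusResult e f u' v'

/-- `M` is the (concrete) result of applying one SNPR− operation to `N`. -/
def IsSNPRminusRes (N M : RawNet n) : Prop :=
  ∃ e a w c z, e ∈ N.E ∧ N.IsRet e.2 ∧ ¬ N.IsRet e.1 ∧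
    (a, e.1) ∈ N.E ∧ (e.1, w) ∈ N.E.erase e ∧ (c, e.2) ∈ N.E.erase e ∧ (e.2, z) ∈ N.E ∧
    M = N.snprMinusResult e.1 e.2 a w c z

/-- `M` is the result of one operation of type SNPR, SNPR+ or SNPR−. -/
def IsAnyRes (N M : RawNet n) : Prop :=
  N.IsSNPRres M ∨ N.IsSNPRplusRes M ∨ N.IsSNPRminusRes M

/-- The neighbourhood of `N` with respect to a one-step result relation `P` — i.e. the set of
tree-child networks, other than `N` itself, obtainable from `N` by exactly one operation,
counted up to leaf-label-preserving isomorphism — has exactly `k` elements. -/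
def NbhdSizeIs (N : RawNet n) (P : RawNet n → RawNet n → Prop) (k : ℕ) : Prop :=
  ∃ L : List (RawNet n), L.length = k ∧ L.Pairwise (fun A B => ¬ A.Iso B) ∧
    (∀ M ∈ L, P N M ∧ M.TreeChild ∧ ¬ M.Iso N) ∧
    (∀ M, P N M → M.TreeChild → ¬ M.Iso N → ∃ M' ∈ L, M.Iso M')

/-- Number of reticulations `r`. -/
def numRet (N : RawNet n) : ℕ := (N.V.filter (fun v => N.IsRet v)).card

/-- `r₁`: number of reticulations whose child is a leaf. -/
def numR1 (N : RawNet n) : ℕ :=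
  (N.V.filter (fun v => N.IsRet v ∧ ∃ w, (v, w) ∈ N.E ∧ N.outDeg w = 0)).card

/-- `r₂`: number of `r₂` structures (a directed path reticulation → `u` → reticulation),
counted by the middle vertex `u`. -/
def numR2 (N : RawNet n) : ℕ :=
  (N.V.filter (fun u => (∃ x, (x, u) ∈ N.E ∧ N.IsRet x) ∧
    ∃ w, (u, w) ∈ N.E ∧ N.IsRet w)).card

/-- `r₃`: number of `r₃` structures (edges `(x,y), (x,u), (u,w)` with `y, w` reticulations),
counted by the middle vertex `u`. -/
def numR3 (N : RawNet n) : ℕ :=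
  (N.V.filter (fun u => (∃ x y, (x, u) ∈ N.E ∧ (x, y) ∈ N.E.erase (x, u) ∧ N.IsRet y) ∧
    ∃ w, (u, w) ∈ N.E ∧ N.IsRet w)).card

/-- `Δ`: number of triangles (edges `(x,u), (u,w), (x,w)`), counted by the middle vertex `u`. -/
def numTri (N : RawNet n) : ℕ :=
  (N.V.filter (fun u => ∃ x w, (x, u) ∈ N.E ∧ (u, w) ∈ N.E ∧ (x, w) ∈ N.E)).card

/-- `Δ*`: number of tree-branching triangles (the second child `v` of the middle vertex `u`
is incident to three pure tree edges). -/
def numTriStar (N : RawNet n) : ℕ :=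
  (N.V.filter (fun u => ∃ x w v, (x, u) ∈ N.E ∧ (u, w) ∈ N.E ∧ (x, w) ∈ N.E ∧
    (u, v) ∈ N.E.erase (u, w) ∧ N.inDeg v = 1 ∧ N.outDeg v = 2 ∧
    ∀ z, (v, z) ∈ N.E → ¬ N.IsRet z)).card

/-- `D`: number of diamonds (edges `(u,v), (u,w), (v,z), (w,z)` with `v ≠ w`),
counted by the top vertex `u`. -/
def numDia (N : RawNet n) : ℕ :=
  (N.V.filter (fun u => ∃ v w z, v ≠ w ∧ (u, v) ∈ N.E ∧ (u, w) ∈ N.E ∧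
    (v, z) ∈ N.E ∧ (w, z) ∈ N.E)).card

/-- `T`: number of trapezoids (edges `(u,v), (v,w), (w,z), (u,z)`) whose outgoing edges at
`v` and `w` are pure tree edges, counted by the top vertex `u`. -/
def numTrap (N : RawNet n) : ℕ :=
  (N.V.filter (fun u => ∃ v w z, (u, v) ∈ N.E ∧ (v, w) ∈ N.E ∧ (w, z) ∈ N.E ∧
    (u, z) ∈ N.E ∧ (∃ v', (v, v') ∈ N.E.erase (v, w) ∧ ¬ N.IsRet v') ∧
    (∃ w', (w, w') ∈ N.E.erase (w, z) ∧ ¬ N.IsRet w'))).card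

/-- `e` is a critical edge: the tree edge from the middle tree vertex of an `r₂` or `r₃`
structure (or triangle) to its second child. -/
def Critical (N : RawNet n) (e : ℕ × ℕ) : Prop :=
  ¬ N.IsRet e.2 ∧ (∃ w, (e.1, w) ∈ N.E ∧ N.IsRet w) ∧
  ((∃ x, (x, e.1) ∈ N.E ∧ N.IsRet x) ∨
   (∃ x y, (x, e.1) ∈ N.E ∧ (x, y) ∈ N.E.erase (x, e.1) ∧ N.IsRet y))

/-- `e` is a pure tree edge (both endpoints are tree vertices and its head is a tree vertex). -/
def PureTree (N : RawNet n) (e : ℕ × ℕ) : Prop := ¬ N.IsRet e.1 ∧ ¬ N.IsRet e.2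

/-- `Σ_{e ∈ E_{T*}} δ(e)`: sum of `δ` over the pure non-critical tree edges. -/
def sumDeltaTstar (N : RawNet n) : ℕ :=
  ((N.E.filter (fun e => N.PureTree e ∧ ¬ N.Critical e)).map (fun e => N.delta e)).sum

/-- `Σ_{e ∈ E_R} δ_T(e)`: sum of `δ_T` over the reticulation edges. -/
def sumDeltaT_R (N : RawNet n) : ℕ :=
  ((N.E.filter (fun e => N.IsRet e.2)).map (fun e => N.deltaT e)).sum

/-- `e` is the bottom side of a triangle. -/
def TriBottom (N : RawNet n) (e : ℕ × ℕ) : Prop := ∃ x, (x, e.1) ∈ N.E ∧ (x, e.2) ∈ N.E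

/-- `Σ_{e ∈ E_Δ} δ_T(e)`: sum of `δ_T` over the bottom sides of triangles. -/
def sumDeltaT_Tri (N : RawNet n) : ℕ :=
  ((N.E.filter (fun e => N.TriBottom e)).map (fun e => N.deltaT e)).sum

/-- `e` is a pure tree edge whose sibling edge is also a pure tree edge. -/
def PSedge (N : RawNet n) (e : ℕ × ℕ) : Prop :=
  N.PureTree e ∧ ∃ w, (e.1, w) ∈ N.E.erase e ∧ ¬ N.IsRet w

/-- `Σ_{e ∈ E_{PS}} δ_T(e)`. -/
def sumDeltaT_PS (N : RawNet n) : ℕ :=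
  ((N.E.filter (fun e => N.PSedge e)).map (fun e => N.deltaT e)).sum

/-- `Σ_{e ∈ E} δ(e)`: sum of `δ` over all edges. -/
def sumDeltaAll (N : RawNet n) : ℕ :=
  (N.E.map (fun e => N.delta e)).sum

/-- Number of pure inner tree edges: edges incident to no reticulation, no leaf,
and not to the root. -/
def numPureInner (N : RawNet n) : ℕ :=
  (N.E.filter (fun e => e.1 ≠ N.root ∧ e.2 ≠ N.root ∧ N.outDeg e.1 ≠ 0 ∧
    N.outDeg e.2 ≠ 0 ∧ ¬ N.IsRet e.1 ∧ ¬ N.IsRet e.2)).card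

/-- The multiset of tree-child respecting SNPR operations `(e,f)` on `N`
(with multiplicity coming from parallel edges). -/
def OpsTCms (N : RawNet n) : Multiset ((ℕ × ℕ) × (ℕ × ℕ)) :=
  N.E.bind (fun e => ((N.E.erase e).filter (fun f => N.SNPRtcCond e f)).map (fun f => (e, f)))

/-- The result of the SNPR operation `θ = (e,f)` on `N` is isomorphic to `M`. -/
def ResultIsoOp (N : RawNet n) (θ : (ℕ × ℕ) × (ℕ × ℕ)) (M : RawNet n) : Prop :=
  ∃ a w u'', (a, θ.1.1) ∈ N.E ∧ (θ.1.1, w) ∈ N.E.erase θ.1 ∧ u'' ∉ N.V ∧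
    (N.snprResult θ.1.1 θ.1.2 a w θ.2.1 θ.2.2 u'').Iso M

/-- `M ≠ N` is obtained from `N` by at least two distinct (redundant) non-trivial
tree-child respecting SNPR operations. -/
def MultiResult (N M : RawNet n) : Prop :=
  ¬ M.Iso N ∧ ∃ θ θ', θ ∈ N.OpsTCms ∧ θ' ∈ N.OpsTCms ∧
    (θ ≠ θ' ∨ 2 ≤ N.OpsTCms.count θ) ∧ N.ResultIsoOp θ M ∧ N.ResultIsoOp θ' M

/-- The number of non-trivial redundant tree-child respecting SNPR operations on `N`. -/
def numNontrivRedundant (N : RawNet n) : ℕ :=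
  (N.OpsTCms.filter (fun θ => ∃ M, N.MultiResult M ∧ N.ResultIsoOp θ M)).card

/-- The number of redundancy sets of non-trivial tree-child respecting SNPR operations on `N`
is `k` (one redundancy set per isomorphism class of networks reached by at least two
redundant non-trivial operations). -/
def NumRedSetsIs (N : RawNet n) (k : ℕ) : Prop :=
  ∃ L : List (RawNet n), L.length = k ∧ L.Pairwise (fun A B => ¬ A.Iso B) ∧
    (∀ M ∈ L, N.MultiResult M) ∧ (∀ M, N.MultiResult M → ∃ M' ∈ L, M.Iso M')

/-- `M` is the result of an NNI operation on the tree `T`: for an inner tree edge `(u,v)`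
(the axis) with sibling edge `(u,s)`, prune an edge `(v,g2)` outgoing from `v`
(whose sibling edge at `v` is `(v,w')`) and regraft it to `(u,s)`. -/
def IsNNIres (T M : RawNet n) : Prop :=
  ∃ u v s g2 w' u'', (u, v) ∈ T.E ∧ (u, s) ∈ T.E.erase (u, v) ∧ T.inDeg u = 1 ∧
    (v, g2) ∈ T.E ∧ (v, w') ∈ T.E.erase (v, g2) ∧ u'' ∉ T.V ∧
    M = T.snprResult v g2 u w' u s u''

end RawNet

/-- The balanced (complete) rooted binary phylogenetic tree on `2^k` leaves: root `0` with
root edge `(0,1)`, inner vertices `1, …, 2^k − 1` with children `2i` and `2i+1`, and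
leaves `2^k, …, 2^(k+1) − 1`. -/
def balancedTree (k : ℕ) : RawNet (2 ^ k) :=
  { V := Finset.range (2 ^ (k + 1))
    E := (0, 1) ::ₘ ((Finset.Icc 1 (2 ^ k - 1)).val.bind
          (fun i => {(i, 2 * i), (i, 2 * i + 1)}))
    root := 0
    leaf := fun i => 2 ^ k + (i : ℕ) }

/-- The tree-child network consisting of a chain of `n − 1` triangles: the root is `0`; the
`j`-th triangle (for `j = 0, …, n−2`) has top vertex `3j+1`, middle tree vertex `3j+2` and
reticulation `3j+3`; the second child of the middle vertex is the leaf `3(n−1)+1+j`; the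
child of the reticulation of triangle `j` is the top vertex of triangle `j+1`, except for
the last triangle, whose reticulation has the leaf `3(n−1)+n` as its child. -/
def chainNet (n : ℕ) : RawNet n :=
  { V := Finset.range (3 * (n - 1) + 1 + n)
    E := (0, 1) ::ₘ
      (((Multiset.range (n - 1)).bind (fun j =>
          {(3 * j + 1, 3 * j + 2), (3 * j + 1, 3 * j + 3), (3 * j + 2, 3 * j + 3),
           (3 * j + 2, 3 * (n - 1) + 1 + j)}))
        + ((Multiset.range (n - 2)).map (fun j => (3 * j + 3, 3 * (j + 1) + 1)))
        + {(3 * (n - 2) + 3, 3 * (n - 1) + 1 + (n - 1))})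
    root := 0
    leaf := fun i => 3 * (n - 1) + 1 + (i : ℕ) }

/-- Deleting any reticulation edge of a tree-child network and suppressing
the two resulting degree-two vertices yields again a tree-child network; that is, every
SNPR− operation on a tree-child network is tree-child respecting. -/
theorem snprMinus_treeChild_respecting (n : ℕ) (hn : 2 ≤ n) (N : RawNet n)
    (hN : N.IsPhylo) (htc : N.TreeChild) :
    ∀ e ∈ N.E, N.IsRet e.2 → ¬ N.IsRet e.1 →
      ∀ a w c z, (a, e.1) ∈ N.E → (e.1, w) ∈ N.E.erase e → (c, e.2) ∈ N.E.erase e →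
        (e.2, z) ∈ N.E → (N.snprMinusResult e.1 e.2 a w c z).TreeChild := by

  intro e he hretv hnretu a w c z hau huw hcv hvz
  obtain ⟨u, v⟩ := e
  dsimp only at hretv hnretu hau huw hcv hvz ⊢
  classical
  -- basic non-equalities from acyclicity
  have hne_self : ∀ {x y : ℕ}, (x, y) ∈ N.E → x ≠ y := by
    rintro x y h rfl
    exact hN.acyclic x (Relation.TransGen.single h)
  have hne2 : ∀ {x y : ℕ}, (x, y) ∈ N.E → (y, x) ∈ N.E → False := by
    intro x y h h'
    exact hN.acyclic x (Relation.TransGen.head h (Relation.TransGen.single h'))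
  have huwE : (u, w) ∈ N.E := Multiset.mem_of_mem_erase huw
  have hcvE : (c, v) ∈ N.E := Multiset.mem_of_mem_erase hcv
  have huv : u ≠ v := hne_self he
  have hanu : a ≠ u := hne_self hau
  have hzv : z ≠ v := Ne.symm (hne_self hvz)
  have hzu : z ≠ u := by rintro rfl; exact hne2 he hvz
  have hav : a ≠ v := by rintro rfl; exact hne2 hau he
  have hwu : w ≠ u := Ne.symm (hne_self huwE)
  -- positivity of degrees from edges
  have hposIn : ∀ {x y : ℕ}, (x, y) ∈ N.E → 0 < N.inDeg y := by
    intro x y h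
    have hm : (x, y) ∈ N.E.filter (fun g => g.2 = y) := Multiset.mem_filter.mpr ⟨h, rfl⟩
    exact Multiset.card_pos.mpr fun h0 => by simp [h0] at hm
  have hposOut : ∀ {x y : ℕ}, (x, y) ∈ N.E → 0 < N.outDeg x := by
    intro x y h
    have hm : (x, y) ∈ N.E.filter (fun g => g.1 = x) := Multiset.mem_filter.mpr ⟨h, rfl⟩
    exact Multiset.card_pos.mpr fun h0 => by simp [h0] at hm
  have huV : u ∈ N.V := (hN.edge_mem _ he).1
  have hvV : v ∈ N.V := (hN.edge_mem _ he).2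
  -- degrees of u and v
  have hu12 : N.inDeg u = 1 ∧ N.outDeg u = 2 := by
    rcases hN.classify u huV with h | ⟨i, h⟩ | h | h
    · have := hposIn hau; rw [h, hN.root_in] at this; omega
    · have := hposOut he; rw [h, hN.leaf_out] at this; omega
    · exact h
    · exact absurd h.1 hnretu
  have hv2 : N.inDeg v = 2 := hretv
  have hv_out : N.outDeg v = 1 := by
    rcases hN.classify v hvV with h | ⟨i, h⟩ | h | h
    · rw [h, hN.root_in] at hv2; omega
    · rw [h, hN.leaf_in] at hv2; omega
    · rw [h.1] at hv2; omega
    · exact h.2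
  -- the filtered out-multiset of u after erasing (u,v) has one element
  have hcard1 : Multiset.card ((N.E.erase (u, v)).filter (fun g => g.1 = u)) = 1 := by
    have h2 : N.outDeg u = 2 := hu12.2
    rw [RawNet.outDeg, ← Multiset.cons_erase he, Multiset.filter_cons] at h2
    rw [if_pos (show ((u, v) : ℕ × ℕ).1 = u from rfl)] at h2
    rw [Multiset.card_add, Multiset.card_singleton] at h2
    omega
  have houtw : ∀ q, (u, q) ∈ N.E → q = v ∨ q = w := by
    intro q hq
    have hmem : (u, w) ∈ (N.E.erase (u, v)).filter (fun g => g.1 = u) :=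
      Multiset.mem_filter.mpr ⟨huw, rfl⟩
    obtain ⟨g, hg⟩ := Multiset.card_eq_one.mp hcard1
    rw [hg, Multiset.mem_singleton] at hmem
    rw [← Multiset.cons_erase he, Multiset.mem_cons] at hq
    rcases hq with h | h
    · exact Or.inl (congrArg Prod.snd h)
    · right
      have hm2 : (u, q) ∈ (N.E.erase (u, v)).filter (fun g => g.1 = u) :=
        Multiset.mem_filter.mpr ⟨h, rfl⟩
      rw [hg, Multiset.mem_singleton, ← hmem] at hm2
      exact congrArg Prod.snd hm2
  -- tree-child at u : the sibling w is not a reticulation, and w ≠ v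
  have hwfacts : ¬ N.IsRet w ∧ w ≠ v := by
    obtain ⟨q, hq, hqr⟩ := htc u huV (by rw [hu12.2]; omega)
    rcases houtw q hq with rfl | rfl
    · exact absurd hretv hqr
    · exact ⟨hqr, fun h => hqr (h ▸ hretv)⟩
  -- u ≠ c (no parallel pair case)
  have huc : u ≠ c := by
    rintro rfl
    have hmem : (u, w) ∈ (N.E.erase (u, v)).filter (fun g => g.1 = u) :=
      Multiset.mem_filter.mpr ⟨huw, rfl⟩
    have hmem2 : (u, v) ∈ (N.E.erase (u, v)).filter (fun g => g.1 = u) :=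
      Multiset.mem_filter.mpr ⟨hcv, rfl⟩
    obtain ⟨g, hg⟩ := Multiset.card_eq_one.mp hcard1
    rw [hg, Multiset.mem_singleton] at hmem hmem2
    exact hwfacts.2 (congrArg Prod.snd (hmem.trans hmem2.symm))
  -- unique out-neighbour of v is z, and it is not a reticulation
  have hvq : ∀ q, (v, q) ∈ N.E → q = z := by
    intro q hq
    have h1 : (v, z) ∈ N.E.filter (fun g => g.1 = v) := Multiset.mem_filter.mpr ⟨hvz, rfl⟩
    have h2 : (v, q) ∈ N.E.filter (fun g => g.1 = v) := Multiset.mem_filter.mpr ⟨hq, rfl⟩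
    have hc : Multiset.card (N.E.filter (fun g => g.1 = v)) = 1 := hv_out
    obtain ⟨g, hg⟩ := Multiset.card_eq_one.mp hc
    rw [hg, Multiset.mem_singleton] at h1 h2
    exact congrArg Prod.snd (h2.trans h1.symm)
  have hznr : ¬ N.IsRet z := by
    obtain ⟨q, hq, hqr⟩ := htc v hvV (by rw [hv_out])
    rwa [hvq q hq] at hqr
  -- unique in-neighbour of u is a
  have hpu : ∀ p, (p, u) ∈ N.E → p = a := by
    intro p hp
    have h1 : (a, u) ∈ N.E.filter (fun g => g.2 = u) := Multiset.mem_filter.mpr ⟨hau, rfl⟩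
    have h2 : (p, u) ∈ N.E.filter (fun g => g.2 = u) := Multiset.mem_filter.mpr ⟨hp, rfl⟩
    have hc : Multiset.card (N.E.filter (fun g => g.2 = u)) = 1 := hu12.1
    obtain ⟨g, hg⟩ := Multiset.card_eq_one.mp hc
    rw [hg, Multiset.mem_singleton] at h1 h2
    exact congrArg Prod.fst (h2.trans h1.symm)
  -- the decomposition of the edge multiset
  have m1 : (a, u) ∈ N.E.erase (u, v) :=
    (Multiset.mem_erase_of_ne (fun h => huv (congrArg Prod.snd h))).mpr hau
  have m2 : (u, w) ∈ (N.E.erase (u, v)).erase (a, u) :=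
    (Multiset.mem_erase_of_ne (fun h => hanu (congrArg Prod.fst h).symm)).mpr huw
  have m3 : (c, v) ∈ ((N.E.erase (u, v)).erase (a, u)).erase (u, w) :=
    (Multiset.mem_erase_of_ne (fun h => huc (congrArg Prod.fst h).symm)).mpr
      ((Multiset.mem_erase_of_ne (fun h => huv (congrArg Prod.snd h).symm)).mpr hcv)
  have m4 : (v, z) ∈ (((N.E.erase (u, v)).erase (a, u)).erase (u, w)).erase (c, v) :=
    (Multiset.mem_erase_of_ne (fun h => hzv (congrArg Prod.snd h))).mpr
      ((Multiset.mem_erase_of_ne (fun h => huv (congrArg Prod.fst h).symm)).mpr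
        ((Multiset.mem_erase_of_ne (fun h => hzu (congrArg Prod.snd h))).mpr
          ((Multiset.mem_erase_of_ne (fun h => huv (congrArg Prod.fst h).symm)).mpr hvz)))
  set E5 : Multiset (ℕ × ℕ) :=
    ((((N.E.erase (u, v)).erase (a, u)).erase (u, w)).erase (c, v)).erase (v, z) with hE5
  have hE : N.E = (u, v) ::ₘ (a, u) ::ₘ (u, w) ::ₘ (c, v) ::ₘ (v, z) ::ₘ E5 := by
    rw [hE5, Multiset.cons_erase m4, Multiset.cons_erase m3, Multiset.cons_erase m2,
      Multiset.cons_erase m1, Multiset.cons_erase he]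
  have hE5sub : ∀ g ∈ E5, g ∈ N.E := by
    intro g hg
    exact Multiset.mem_of_mem_erase (Multiset.mem_of_mem_erase
      (Multiset.mem_of_mem_erase (Multiset.mem_of_mem_erase (Multiset.mem_of_mem_erase hg))))
  -- unfold the result
  unfold RawNet.snprMinusResult
  rw [if_neg huc]
  intro p hp hout
  simp only [Finset.mem_erase] at hp
  obtain ⟨hpv, hpu', hpV⟩ := hp
  -- the in-degrees of surviving vertices are unchanged
  have hdeg : ∀ x, x ≠ u → x ≠ v →
      Multiset.card ((E5 + {(a, w), (c, z)}).filter (fun g => g.2 = x)) = N.inDeg x := by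
    intro x hxu hxv
    rw [RawNet.inDeg, hE]
    simp only [Multiset.filter_add, Multiset.filter_cons, Multiset.card_add]
    have h1 : ¬ ((u, v).2 = x) := fun h => hxv h.symm
    have h2 : ¬ ((a, u).2 = x) := fun h => hxu h.symm
    have h3 : ¬ ((c, v).2 = x) := fun h => hxv h.symm
    rw [if_neg h1, if_neg h2, if_neg h3]
    have : Multiset.filter (fun g => g.2 = x) ({(a, w), (c, z)} : Multiset (ℕ × ℕ))
        = Multiset.filter (fun g => g.2 = x) {(a, w)}
          + Multiset.filter (fun g => g.2 = x) {(c, z)} := by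
      rw [← Multiset.filter_add]; rfl
    rw [this]
    simp only [Multiset.filter_singleton, Multiset.card_add]
    by_cases hw : w = x <;> by_cases hz : z = x <;>
      simp [hw, hz] <;> omega
  -- out-degree positivity in N
  have hpout : 1 ≤ N.outDeg p := by
    rw [RawNet.outDeg] at hout
    have hne : ((E5 + {(a, w), (c, z)}).filter (fun g => g.1 = p)) ≠ 0 := by
      intro h0; rw [h0] at hout; simp at hout
    obtain ⟨g, hg⟩ := Multiset.exists_mem_of_ne_zero hne
    obtain ⟨hgE, hgp⟩ := Multiset.mem_filter.mp hg
    rcases Multiset.mem_add.mp hgE with h | h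
    · have : (g.1, g.2) ∈ N.E := hE5sub _ h
      have := hposOut this
      rw [hgp] at this; omega
    · simp only [Multiset.insert_eq_cons, Multiset.mem_cons, Multiset.mem_singleton] at h
      rcases h with rfl | rfl
      · simp only at hgp; subst hgp; have := hposOut hau; omega
      · simp only at hgp; subst hgp; have := hposOut hcvE; omega
  -- tree-child witness in N
  obtain ⟨q, hpq, hqnr⟩ := htc p hpV hpout
  by_cases hqu : q = u
  · -- then p = a ; use the new edge (a, w)
    subst hqu
    have hpa : p = a := hpu p hpq
    subst hpa
    refine ⟨w, ?_, ?_⟩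
    · exact Multiset.mem_add.mpr (Or.inr (by simp))
    · show ¬ RawNet.IsRet _ w
      simp only [RawNet.IsRet, RawNet.inDeg]
      rw [hdeg w hwu hwfacts.2]
      exact hwfacts.1
  · -- the old edge (p, q) survives
    have hqv : q ≠ v := fun h => hqnr (h ▸ hretv)
    have hpqE5 : (p, q) ∈ E5 := by
      rw [hE] at hpq
      simp only [Multiset.mem_cons, Prod.mk.injEq] at hpq
      rcases hpq with ⟨h1, h2⟩ | ⟨h1, h2⟩ | ⟨h1, h2⟩ | ⟨h1, h2⟩ | ⟨h1, h2⟩ | h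
      · exact absurd h1 hpu'
      · exact absurd h2 hqu
      · exact absurd h1 hpu'
      · exact absurd h2 hqv
      · exact absurd h1 hpv
      · exact h
    refine ⟨q, Multiset.mem_add.mpr (Or.inl hpqE5), ?_⟩
    show ¬ RawNet.IsRet _ q
    simp only [RawNet.IsRet, RawNet.inDeg]
    rw [hdeg q hqu hqv]
    exact hqnr
end
end

section
/- Let N be a tree-child network on n ≥ 2 leaves with r reticulations, of which r₁ have a leaf as child. Then N has exactly n + r₁ − 2 pure inner tree edges, i.e. edges that are incident to no reticulation, no leaf, and not to the root. -/
/-!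
Formalization of rooted binary phylogenetic networks (directed multigraphs with
labelled leaves), tree-child networks, and the SNPR / SNPR+ / SNPR− rearrangement
operations, following Klawitter, "The SNPR neighbourhood of tree-child networks".
-/

noncomputable section

attribute [local instance] Classical.propDecidable

section AuxCounting

lemma aux_two_le_card {α : Type*} {s : Multiset α} {a b : α} (ha : a ∈ s) (hb : b ∈ s)
    (hab : a ≠ b) : 2 ≤ Multiset.card s := by
  have hb' : b ∈ s.erase a := (Multiset.mem_erase_of_ne (Ne.symm hab)).2 hb
  have h1 : 0 < Multiset.card (s.erase a) := Multiset.card_pos_iff_exists_mem.2 ⟨b, hb'⟩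
  have h2 : Multiset.card (s.erase a) = Nat.pred (Multiset.card s) :=
    Multiset.card_erase_of_mem ha
  rw [Nat.pred_eq_sub_one] at h2
  omega

lemma aux_filter_or {α : Type*} (p q : α → Prop) [DecidablePred p] [DecidablePred q]
    (s : Multiset α) (hdisj : ∀ a ∈ s, ¬ (p a ∧ q a)) :
    Multiset.card (s.filter (fun a => p a ∨ q a)) =
      Multiset.card (s.filter p) + Multiset.card (s.filter q) := by
  classical
  revert hdisj
  induction s using Multiset.induction_on with
  | empty => intro _; simp
  | cons a s ih =>
      intro hdisj
      have hd : ∀ x ∈ s, ¬ (p x ∧ q x) := fun x hx => hdisj x (Multiset.mem_cons_of_mem hx)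
      have ha := hdisj a (Multiset.mem_cons_self a s)
      have IH := ih hd
      by_cases hp : p a <;> by_cases hq : q a
      · exact absurd ⟨hp, hq⟩ ha
      all_goals simp [Multiset.filter_cons, hp, hq, IH] <;> omega

lemma aux_filter_split {α : Type*} (p q : α → Prop) [DecidablePred p] [DecidablePred q]
    (s : Multiset α) :
    Multiset.card (s.filter p) =
      Multiset.card (s.filter (fun a => q a ∧ p a)) +
      Multiset.card (s.filter (fun a => ¬ q a ∧ p a)) := by
  classical
  induction s using Multiset.induction_on with
  | empty => simp
  | cons a s ih =>
      by_cases hp : p a <;> by_cases hq : q a <;>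
        simp [Multiset.filter_cons, hp, hq, ih] <;> omega

lemma aux_card_congr {α : Type*} {p q : α → Prop} (hp : DecidablePred p)
    (hq : DecidablePred q) {s : Multiset α} (h : ∀ a ∈ s, p a ↔ q a) :
    Multiset.card (@Multiset.filter α p hp s) = Multiset.card (@Multiset.filter α q hq s) :=
  congrArg Multiset.card (@Multiset.filter_congr α p q hp hq s h)

lemma aux_fcard_congr {α : Type*} {p q : α → Prop} (hp : DecidablePred p)
    (hq : DecidablePred q) {s : Finset α} (h : ∀ a ∈ s, p a ↔ q a) :
    (@Finset.filter α p hp s).card = (@Finset.filter α q hq s).card :=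
  congrArg Finset.card (@Finset.filter_congr α p q hp hq s h)

namespace RawNet

variable {n : ℕ}

lemma aux_inDeg_pos (N : RawNet n) {a b : ℕ} (h : (a, b) ∈ N.E) : 0 < N.inDeg b :=
  Multiset.card_pos_iff_exists_mem.2 ⟨(a, b), Multiset.mem_filter.2 ⟨h, rfl⟩⟩

lemma aux_outDeg_pos (N : RawNet n) {a b : ℕ} (h : (a, b) ∈ N.E) : 0 < N.outDeg a :=
  Multiset.card_pos_iff_exists_mem.2 ⟨(a, b), Multiset.mem_filter.2 ⟨h, rfl⟩⟩

lemma aux_unique_child (N : RawNet n) {u v w : ℕ} (hu : N.outDeg u = 1)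
    (hv : (u, v) ∈ N.E) (hw : (u, w) ∈ N.E) : w = v := by
  by_contra hne
  have h1 : (u, v) ∈ N.E.filter (fun e => e.1 = u) := Multiset.mem_filter.2 ⟨hv, rfl⟩
  have h2 : (u, w) ∈ N.E.filter (fun e => e.1 = u) := Multiset.mem_filter.2 ⟨hw, rfl⟩
  have h3 := aux_two_le_card h1 h2 (by simp [Prod.ext_iff]; tauto)
  rw [show Multiset.card (N.E.filter (fun e => e.1 = u)) = N.outDeg u from rfl, hu] at h3
  omega

/-- An instance-stable edge counter. -/
def ecnt (N : RawNet n) (p : ℕ × ℕ → Prop) : ℕ := Multiset.card (N.E.filter p)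

lemma ecnt_congr {N : RawNet n} {p q : ℕ × ℕ → Prop} (h : ∀ e ∈ N.E, p e ↔ q e) :
    N.ecnt p = N.ecnt q :=
  aux_card_congr _ _ h

lemma ecnt_inDeg (N : RawNet n) (v : ℕ) : N.ecnt (fun e => e.2 = v) = N.inDeg v :=
  aux_card_congr _ _ (fun _ _ => Iff.rfl)

lemma ecnt_outDeg (N : RawNet n) (v : ℕ) : N.ecnt (fun e => e.1 = v) = N.outDeg v :=
  aux_card_congr _ _ (fun _ _ => Iff.rfl)

lemma ecnt_card {N : RawNet n} (p : ℕ × ℕ → Prop) [DecidablePred p] :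
    N.ecnt p = Multiset.card (N.E.filter p) :=
  aux_card_congr _ _ (fun _ _ => Iff.rfl)

lemma ecnt_or (N : RawNet n) (p q : ℕ × ℕ → Prop) (hdisj : ∀ e ∈ N.E, ¬ (p e ∧ q e)) :
    N.ecnt (fun e => p e ∨ q e) = N.ecnt p + N.ecnt q := by
  classical
  have h := aux_filter_or p q N.E hdisj
  have b1 : N.ecnt (fun e => p e ∨ q e) =
      Multiset.card (N.E.filter (fun a => p a ∨ q a)) := aux_card_congr _ _ (fun _ _ => Iff.rfl)
  have b2 : Multiset.card (N.E.filter p) = N.ecnt p := aux_card_congr _ _ (fun _ _ => Iff.rfl)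
  have b3 : Multiset.card (N.E.filter q) = N.ecnt q := aux_card_congr _ _ (fun _ _ => Iff.rfl)
  rw [b2, b3] at h
  exact b1.trans h

lemma ecnt_split (N : RawNet n) (p q : ℕ × ℕ → Prop) :
    N.ecnt p = N.ecnt (fun e => q e ∧ p e) + N.ecnt (fun e => ¬ q e ∧ p e) := by
  classical
  have h := aux_filter_split p q N.E
  have b1 : Multiset.card (N.E.filter p) = N.ecnt p := aux_card_congr _ _ (fun _ _ => Iff.rfl)
  have b2 : Multiset.card (N.E.filter (fun a => q a ∧ p a)) =
      N.ecnt (fun e => q e ∧ p e) := aux_card_congr _ _ (fun _ _ => Iff.rfl)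
  have b3 : Multiset.card (N.E.filter (fun a => ¬ q a ∧ p a)) =
      N.ecnt (fun e => ¬ q e ∧ p e) := aux_card_congr _ _ (fun _ _ => Iff.rfl)
  rw [b1, b2, b3] at h
  exact h

lemma ecnt_head_sum (N : RawNet n) (S : Finset ℕ) :
    N.ecnt (fun e => e.2 ∈ S) = ∑ v ∈ S, N.inDeg v := by
  induction S using Finset.induction_on with
  | empty =>
      have h : N.ecnt (fun e => e.2 ∈ (∅ : Finset ℕ)) = N.ecnt (fun _ => False) :=
        ecnt_congr (fun e _ => by simp)
      rw [h]
      simp [ecnt, Multiset.filter_eq_nil]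
  | @insert a S ha ih =>
      rw [Finset.sum_insert ha, ← ih, ← N.ecnt_inDeg a]
      have h1 : N.ecnt (fun e => e.2 ∈ insert a S) =
          N.ecnt (fun e => e.2 = a ∨ e.2 ∈ S) :=
        ecnt_congr (fun e _ => by simp [Finset.mem_insert])
      rw [h1]
      exact N.ecnt_or _ _ (fun e _ h => ha (h.1 ▸ h.2))

lemma ecnt_tail_sum (N : RawNet n) (S : Finset ℕ) :
    N.ecnt (fun e => e.1 ∈ S) = ∑ v ∈ S, N.outDeg v := by
  induction S using Finset.induction_on with
  | empty =>
      have h : N.ecnt (fun e => e.1 ∈ (∅ : Finset ℕ)) = N.ecnt (fun _ => False) :=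
        ecnt_congr (fun e _ => by simp)
      rw [h]
      simp [ecnt, Multiset.filter_eq_nil]
  | @insert a S ha ih =>
      rw [Finset.sum_insert ha, ← ih, ← N.ecnt_outDeg a]
      have h1 : N.ecnt (fun e => e.1 ∈ insert a S) =
          N.ecnt (fun e => e.1 = a ∨ e.1 ∈ S) :=
        ecnt_congr (fun e _ => by simp [Finset.mem_insert])
      rw [h1]
      exact N.ecnt_or _ _ (fun e _ h => ha (h.1 ▸ h.2))

lemma ecnt_tail_sum' (N : RawNet n) (S : Finset ℕ) :
    N.ecnt (fun e => e.1 ∈ S ∧ N.outDeg e.2 = 0) =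
      ∑ v ∈ S, N.ecnt (fun e => e.1 = v ∧ N.outDeg e.2 = 0) := by
  induction S using Finset.induction_on with
  | empty =>
      have h : N.ecnt (fun e => e.1 ∈ (∅ : Finset ℕ) ∧ N.outDeg e.2 = 0) =
          N.ecnt (fun _ => False) := ecnt_congr (fun e _ => by simp)
      rw [h]
      simp [ecnt, Multiset.filter_eq_nil]
  | @insert a S ha ih =>
      rw [Finset.sum_insert ha, ← ih]
      have h1 : N.ecnt (fun e => e.1 ∈ insert a S ∧ N.outDeg e.2 = 0) =
          N.ecnt (fun e => (e.1 = a ∧ N.outDeg e.2 = 0) ∨ (e.1 ∈ S ∧ N.outDeg e.2 = 0)) :=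
        ecnt_congr (fun e _ => by
          simp only [Finset.mem_insert, or_and_right])
      rw [h1]
      exact N.ecnt_or _ _ (fun e _ h => ha (h.1.1 ▸ h.2.1))

end RawNet

end AuxCounting

/-- A tree-child network on `n ≥ 2` leaves with `r` reticulations, of which
`r₁` have a leaf as child, has exactly `n + r₁ − 2` pure inner tree edges (edges incident
to no reticulation, no leaf, and not to the root). -/
theorem numPureInner_eq (n : ℕ) (hn : 2 ≤ n) (N : RawNet n)
    (hN : N.IsPhylo) (htc : N.TreeChild) :
    (N.numPureInner : ℤ) = (n : ℤ) + (N.numR1 : ℤ) - 2 := by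
  classical
  obtain ⟨edge_mem, acyc, root_mem, root_in, root_out, leaf_mem, leaf_inj, leaf_in,
    leaf_out, classify⟩ := hN
  -- degree classification of vertices
  have classify' : ∀ v ∈ N.V,
      (N.inDeg v = 0 ∧ N.outDeg v = 1 ∧ v = N.root) ∨
      (N.inDeg v = 1 ∧ N.outDeg v = 0 ∧ ∃ i, v = N.leaf i) ∨
      (N.inDeg v = 1 ∧ N.outDeg v = 2) ∨
      (N.inDeg v = 2 ∧ N.outDeg v = 1) := by
    intro v hv
    rcases classify v hv with h | ⟨i, h⟩ | h | h
    · exact Or.inl ⟨h ▸ root_in, h ▸ root_out, h⟩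
    · exact Or.inr (Or.inl ⟨h ▸ leaf_in i, h ▸ leaf_out i, i, h⟩)
    · exact Or.inr (Or.inr (Or.inl h))
    · exact Or.inr (Or.inr (Or.inr h))
  have head_ne_root : ∀ e ∈ N.E, e.2 ≠ N.root := by
    intro e he hr
    have h := N.aux_inDeg_pos (a := e.1) (b := e.2) (by simpa using he)
    rw [hr, root_in] at h
    omega
  have tail_out_pos : ∀ e ∈ N.E, 0 < N.outDeg e.1 := by
    intro e he
    exact N.aux_outDeg_pos (a := e.1) (b := e.2) (by simpa using he)
  -- head of the unique edge out of a vertex of out-degree one is not a reticulation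
  have nonret_head : ∀ e ∈ N.E, N.outDeg e.1 = 1 → ¬ N.IsRet e.2 := by
    intro e he hout
    obtain ⟨w, hw, hwr⟩ := htc e.1 (edge_mem e he).1 (by omega)
    have h2 : e.2 = w := N.aux_unique_child hout hw (by simpa using he)
    rw [h2]
    exact hwr
  -- no edge from the root to a leaf (needs n ≥ 2)
  have no_root_leaf : ∀ w, (N.root, w) ∈ N.E → N.outDeg w ≠ 0 := by
    intro w hw hw0
    have parent : ∀ v ∈ N.V, v ≠ N.root → v ≠ w →
        ∃ p, p ∈ N.V ∧ (p, v) ∈ N.E ∧ p ≠ N.root ∧ p ≠ w := by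
      intro v hv hvr hvw
      have hin : 0 < N.inDeg v := by
        rcases classify' v hv with ⟨_, _, h⟩ | ⟨h, _⟩ | ⟨h, _⟩ | ⟨h, _⟩
        · exact absurd h hvr
        all_goals omega
      obtain ⟨e, he⟩ := Multiset.card_pos_iff_exists_mem.1 hin
      obtain ⟨p, v2⟩ := e
      have heE : (p, v2) ∈ N.E := (Multiset.mem_filter.1 he).1
      have he2 : v2 = v := (Multiset.mem_filter.1 he).2
      rw [he2] at heE
      refine ⟨p, (edge_mem _ heE).1, heE, ?_, ?_⟩
      · rintro rfl
        have h1 : (N.root, v) ∈ N.E.filter (fun e => e.1 = N.root) :=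
          Multiset.mem_filter.2 ⟨heE, rfl⟩
        have h2 : (N.root, w) ∈ N.E.filter (fun e => e.1 = N.root) :=
          Multiset.mem_filter.2 ⟨hw, rfl⟩
        have h3 := aux_two_le_card h1 h2 (by simp [Prod.ext_iff]; exact hvw)
        rw [show Multiset.card (N.E.filter (fun e => e.1 = N.root)) = N.outDeg N.root from rfl,
          root_out] at h3
        omega
      · rintro rfl
        have := tail_out_pos (p, v) heE
        simp only at this
        omega
    have strict : ∀ v ∈ N.V, v ≠ N.root → v ≠ w →
        ∃ p, p ∈ N.V ∧ p ≠ N.root ∧ p ≠ w ∧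
          (N.V.filter (fun u => Relation.TransGen N.Adj u p)).card <
          (N.V.filter (fun u => Relation.TransGen N.Adj u v)).card := by
      intro v hv h1 h2
      obtain ⟨p, hpV, hpE, hp1, hp2⟩ := parent v hv h1 h2
      have hadj : N.Adj p v := hpE
      have hsub : (N.V.filter (fun u => Relation.TransGen N.Adj u p)) ⊆
          (N.V.filter (fun u => Relation.TransGen N.Adj u v)) := by
        intro u hu
        obtain ⟨huV, htg⟩ := Finset.mem_filter.1 hu
        exact Finset.mem_filter.2 ⟨huV, htg.tail hadj⟩
      refine ⟨p, hpV, hp1, hp2, Finset.card_lt_card ?_⟩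
      rw [Finset.ssubset_iff_of_subset hsub]
      refine ⟨p, Finset.mem_filter.2 ⟨hpV, Relation.TransGen.single hadj⟩, ?_⟩
      intro hc
      exact acyc p (Finset.mem_filter.1 hc).2
    have main : ∀ k, ∀ v, v ∈ N.V → v ≠ N.root → v ≠ w →
        (N.V.filter (fun u => Relation.TransGen N.Adj u v)).card ≤ k → False := by
      intro k
      induction k with
      | zero =>
          intro v hv h1 h2 hle
          obtain ⟨p, _, _, _, hlt⟩ := strict v hv h1 h2
          omega
      | succ k ih =>
          intro v hv h1 h2 hle
          obtain ⟨p, hpV, hp1, hp2, hlt⟩ := strict v hv h1 h2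
          exact ih p hpV hp1 hp2 (by omega)
    have hfin : ∃ i : Fin n, N.leaf i ≠ w := by
      by_contra hc
      push_neg at hc
      have h01 : (⟨0, by omega⟩ : Fin n) ≠ (⟨1, by omega⟩ : Fin n) := by
        simp [Fin.ext_iff]
      exact h01 (leaf_inj (by rw [hc, hc]))
    obtain ⟨i, hi⟩ := hfin
    have hlr : N.leaf i ≠ N.root := by
      intro h
      have := leaf_in i
      rw [h, root_in] at this
      omega
    exact main _ (N.leaf i) (leaf_mem i) hlr hi le_rfl
  -- heads of root edges are inner tree vertices
  have root_head : ∀ e ∈ N.E, e.1 = N.root → N.inDeg e.2 = 1 ∧ N.outDeg e.2 = 2 := by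
    intro e he h1
    have hv : e.2 ∈ N.V := (edge_mem e he).2
    have hnr : ¬ N.IsRet e.2 := nonret_head e he (by rw [h1]; exact root_out)
    have hout : N.outDeg e.2 ≠ 0 := by
      apply no_root_leaf
      rw [← h1]
      simpa using he
    rcases classify' e.2 hv with ⟨_, _, h⟩ | ⟨_, h, _⟩ | h | ⟨h, _⟩
    · exact absurd h (head_ne_root e he)
    · omega
    · exact h
    · exact absurd h hnr
  -- heads of reticulation edges are inner tree vertices or leaves
  have ret_head : ∀ e ∈ N.E, N.inDeg e.1 = 2 →
      (N.inDeg e.2 = 1 ∧ N.outDeg e.2 = 2) ∨ N.outDeg e.2 = 0 := by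
    intro e he h2
    have hv : e.2 ∈ N.V := (edge_mem e he).2
    have hout1 : N.outDeg e.1 = 1 := by
      rcases classify' e.1 (edge_mem e he).1 with ⟨h, _, _⟩ | ⟨h, _, _⟩ | ⟨h, _⟩ | ⟨_, h⟩ <;> omega
    have hnr : ¬ N.IsRet e.2 := nonret_head e he hout1
    rcases classify' e.2 hv with ⟨_, _, h⟩ | ⟨_, h, _⟩ | h | ⟨h, _⟩
    · exact absurd h (head_ne_root e he)
    · exact Or.inr h
    · exact Or.inl h
    · exact absurd h hnr
  -- vertex-class cardinalities
  have hL_card : (N.V.filter (fun v => N.outDeg v = 0)).card = n := by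
    have himg : N.V.filter (fun v => N.outDeg v = 0) = Finset.image N.leaf Finset.univ := by
      ext v
      simp only [Finset.mem_filter, Finset.mem_image, Finset.mem_univ, true_and]
      constructor
      · rintro ⟨hv, h0⟩
        rcases classify' v hv with ⟨_, h, _⟩ | ⟨_, _, i, hi⟩ | ⟨_, h⟩ | ⟨_, h⟩
        · omega
        · exact ⟨i, hi.symm⟩
        · omega
        · omega
      · rintro ⟨i, rfl⟩
        exact ⟨leaf_mem i, leaf_out i⟩
    rw [himg, Finset.card_image_of_injective _ leaf_inj, Finset.card_univ, Fintype.card_fin]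
  have hZ : N.V.filter (fun v => N.inDeg v = 0) = {N.root} := by
    ext v
    simp only [Finset.mem_filter, Finset.mem_singleton]
    constructor
    · rintro ⟨hv, h0⟩
      rcases classify' v hv with ⟨_, _, h⟩ | ⟨h, _⟩ | ⟨h, _⟩ | ⟨h, _⟩
      · exact h
      all_goals omega
    · rintro rfl
      exact ⟨root_mem, root_in⟩
  -- total edge count by in-degrees and by out-degrees
  have hEin : Multiset.card N.E = ∑ v ∈ N.V, N.inDeg v := by
    have h1 : N.E.filter (fun e => e.2 ∈ N.V) = N.E :=
      Multiset.filter_eq_self.2 (fun e he => (edge_mem e he).2)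
    have h0 : N.ecnt (fun e => e.2 ∈ N.V) = Multiset.card N.E := by
      rw [RawNet.ecnt_card, h1]
    rw [← h0, N.ecnt_head_sum]
  have hEout : Multiset.card N.E = ∑ v ∈ N.V, N.outDeg v := by
    have h1 : N.E.filter (fun e => e.1 ∈ N.V) = N.E :=
      Multiset.filter_eq_self.2 (fun e he => (edge_mem e he).1)
    have h0 : N.ecnt (fun e => e.1 ∈ N.V) = Multiset.card N.E := by
      rw [RawNet.ecnt_card, h1]
    rw [← h0, N.ecnt_tail_sum]
  -- evaluate the sums per vertex class
  have per_in : ∀ v ∈ N.V, N.inDeg v =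
      (if N.outDeg v = 0 then 1 else 0) +
      (if N.inDeg v = 1 ∧ N.outDeg v = 2 then 1 else 0) +
      (if N.inDeg v = 2 then 2 else 0) := by
    intro v hv
    rcases classify' v hv with ⟨h1, h2, _⟩ | ⟨h1, h2, _⟩ | ⟨h1, h2⟩ | ⟨h1, h2⟩ <;>
      split_ifs <;> omega
  have per_out : ∀ v ∈ N.V, N.outDeg v =
      (if N.inDeg v = 0 then 1 else 0) +
      (if N.inDeg v = 1 ∧ N.outDeg v = 2 then 2 else 0) +
      (if N.inDeg v = 2 then 1 else 0) := by
    intro v hv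
    rcases classify' v hv with ⟨h1, h2, _⟩ | ⟨h1, h2, _⟩ | ⟨h1, h2⟩ | ⟨h1, h2⟩ <;>
      split_ifs <;> omega
  have hin_eq : ∑ v ∈ N.V, N.inDeg v =
      n + (N.V.filter (fun v => N.inDeg v = 1 ∧ N.outDeg v = 2)).card +
      2 * (N.V.filter (fun v => N.inDeg v = 2)).card := by
    rw [Finset.sum_congr rfl per_in, Finset.sum_add_distrib, Finset.sum_add_distrib]
    have e1 : ∑ v ∈ N.V, (if N.outDeg v = 0 then 1 else 0) =
        (N.V.filter (fun v => N.outDeg v = 0)).card := (Finset.card_filter _ _).symm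
    have e2 : ∑ v ∈ N.V, (if N.inDeg v = 1 ∧ N.outDeg v = 2 then 1 else 0) =
        (N.V.filter (fun v => N.inDeg v = 1 ∧ N.outDeg v = 2)).card :=
      (Finset.card_filter _ _).symm
    have e3 : ∑ v ∈ N.V, (if N.inDeg v = 2 then 2 else 0) =
        2 * (N.V.filter (fun v => N.inDeg v = 2)).card := by
      have h : ∀ v ∈ N.V, (if N.inDeg v = 2 then 2 else 0) =
          2 * (if N.inDeg v = 2 then 1 else 0) := by
        intro v _
        split_ifs <;> ring
      rw [Finset.sum_congr rfl h, ← Finset.mul_sum, ← Finset.card_filter]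
    rw [e1, e2, e3, hL_card]
  have hout_eq : ∑ v ∈ N.V, N.outDeg v =
      1 + 2 * (N.V.filter (fun v => N.inDeg v = 1 ∧ N.outDeg v = 2)).card +
      (N.V.filter (fun v => N.inDeg v = 2)).card := by
    rw [Finset.sum_congr rfl per_out, Finset.sum_add_distrib, Finset.sum_add_distrib]
    have e1 : ∑ v ∈ N.V, (if N.inDeg v = 0 then 1 else 0) = 1 := by
      rw [← Finset.card_filter, hZ, Finset.card_singleton]
    have e2 : ∑ v ∈ N.V, (if N.inDeg v = 1 ∧ N.outDeg v = 2 then 2 else 0) =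
        2 * (N.V.filter (fun v => N.inDeg v = 1 ∧ N.outDeg v = 2)).card := by
      have h : ∀ v ∈ N.V, (if N.inDeg v = 1 ∧ N.outDeg v = 2 then 2 else 0) =
          2 * (if N.inDeg v = 1 ∧ N.outDeg v = 2 then 1 else 0) := by
        intro v _
        split_ifs <;> ring
      rw [Finset.sum_congr rfl h, ← Finset.mul_sum, ← Finset.card_filter]
    have e3 : ∑ v ∈ N.V, (if N.inDeg v = 2 then 1 else 0) =
        (N.V.filter (fun v => N.inDeg v = 2)).card := (Finset.card_filter _ _).symm
    rw [e1, e2, e3]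
  -- number of edges whose head is an inner tree vertex
  have hT_edges : N.ecnt (fun e => N.inDeg e.2 = 1 ∧ N.outDeg e.2 = 2) =
      (N.V.filter (fun v => N.inDeg v = 1 ∧ N.outDeg v = 2)).card := by
    have h1 : N.ecnt (fun e => N.inDeg e.2 = 1 ∧ N.outDeg e.2 = 2) =
        N.ecnt (fun e => e.2 ∈ N.V.filter (fun v => N.inDeg v = 1 ∧ N.outDeg v = 2)) :=
      RawNet.ecnt_congr (fun e he => by
        simp only [Finset.mem_filter]
        exact ⟨fun h => ⟨(edge_mem e he).2, h⟩, fun h => h.2⟩)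
    rw [h1, N.ecnt_head_sum,
      Finset.sum_congr rfl (fun v hv => (Finset.mem_filter.1 hv).2.1), Finset.sum_const,
      smul_eq_mul, mul_one]
  -- number of edges whose tail is a reticulation
  have hR_edges : N.ecnt (fun e => N.inDeg e.1 = 2) =
      (N.V.filter (fun v => N.inDeg v = 2)).card := by
    have h1 : N.ecnt (fun e => N.inDeg e.1 = 2) =
        N.ecnt (fun e => e.1 ∈ N.V.filter (fun v => N.inDeg v = 2)) :=
      RawNet.ecnt_congr (fun e he => by
        simp only [Finset.mem_filter]
        exact ⟨fun h => ⟨(edge_mem e he).1, h⟩, fun h => h.2⟩)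
    have h2 : ∀ v ∈ N.V.filter (fun v => N.inDeg v = 2), N.outDeg v = 1 := by
      intro v hv
      obtain ⟨hvV, hdeg⟩ := Finset.mem_filter.1 hv
      rcases classify' v hvV with ⟨h, _, _⟩ | ⟨h, _, _⟩ | ⟨h, _⟩ | ⟨_, h⟩ <;> omega
    rw [h1, N.ecnt_tail_sum, Finset.sum_congr rfl h2, Finset.sum_const, smul_eq_mul,
      mul_one]
  -- splits
  have split1 : N.ecnt (fun e => N.inDeg e.2 = 1 ∧ N.outDeg e.2 = 2) =
      N.ecnt (fun e => (N.inDeg e.1 = 1 ∧ N.outDeg e.1 = 2) ∧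
        (N.inDeg e.2 = 1 ∧ N.outDeg e.2 = 2)) +
      N.ecnt (fun e => ¬ (N.inDeg e.1 = 1 ∧ N.outDeg e.1 = 2) ∧
        (N.inDeg e.2 = 1 ∧ N.outDeg e.2 = 2)) :=
    N.ecnt_split _ _
  have split2 : N.ecnt (fun e => ¬ (N.inDeg e.1 = 1 ∧ N.outDeg e.1 = 2) ∧
        (N.inDeg e.2 = 1 ∧ N.outDeg e.2 = 2)) =
      N.ecnt (fun e => e.1 = N.root ∧ (¬ (N.inDeg e.1 = 1 ∧ N.outDeg e.1 = 2) ∧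
        (N.inDeg e.2 = 1 ∧ N.outDeg e.2 = 2))) +
      N.ecnt (fun e => ¬ e.1 = N.root ∧ (¬ (N.inDeg e.1 = 1 ∧ N.outDeg e.1 = 2) ∧
        (N.inDeg e.2 = 1 ∧ N.outDeg e.2 = 2))) :=
    N.ecnt_split _ _
  have split3 : N.ecnt (fun e => N.inDeg e.1 = 2) =
      N.ecnt (fun e => (N.inDeg e.2 = 1 ∧ N.outDeg e.2 = 2) ∧ N.inDeg e.1 = 2) +
      N.ecnt (fun e => ¬ (N.inDeg e.2 = 1 ∧ N.outDeg e.2 = 2) ∧ N.inDeg e.1 = 2) :=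
    N.ecnt_split _ _
  -- the root part counts exactly one edge
  have hroot_part : N.ecnt (fun e => e.1 = N.root ∧ (¬ (N.inDeg e.1 = 1 ∧ N.outDeg e.1 = 2) ∧
      (N.inDeg e.2 = 1 ∧ N.outDeg e.2 = 2))) = 1 := by
    have h1 : N.ecnt (fun e => e.1 = N.root ∧ (¬ (N.inDeg e.1 = 1 ∧ N.outDeg e.1 = 2) ∧
        (N.inDeg e.2 = 1 ∧ N.outDeg e.2 = 2))) = N.ecnt (fun e => e.1 = N.root) := by
      apply RawNet.ecnt_congr
      intro e he
      constructor
      · exact fun h => h.1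
      · intro h
        obtain ⟨h1, h2⟩ := root_head e he h
        refine ⟨h, ?_, h1, h2⟩
        rintro ⟨ha, _⟩
        rw [h, root_in] at ha
        omega
    rw [h1, N.ecnt_outDeg, root_out]
  -- the non-root non-tree-tail part consists of the reticulation-tail edges
  have hnonroot_part : N.ecnt (fun e => ¬ e.1 = N.root ∧
      (¬ (N.inDeg e.1 = 1 ∧ N.outDeg e.1 = 2) ∧ (N.inDeg e.2 = 1 ∧ N.outDeg e.2 = 2))) =
      N.ecnt (fun e => (N.inDeg e.2 = 1 ∧ N.outDeg e.2 = 2) ∧ N.inDeg e.1 = 2) := by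
    apply RawNet.ecnt_congr
    intro e he
    constructor
    · rintro ⟨h1, h2, h3⟩
      refine ⟨h3, ?_⟩
      have hout := tail_out_pos e he
      rcases classify' e.1 (edge_mem e he).1 with ⟨_, _, h⟩ | ⟨_, h, _⟩ | h | ⟨h, _⟩
      · exact absurd h h1
      · omega
      · exact absurd h h2
      · exact h
    · rintro ⟨h3, h2⟩
      refine ⟨?_, ?_, h3⟩
      · intro h
        rw [h, root_in] at h2
        omega
      · rintro ⟨ha, _⟩
        omega
  -- the non-tree-head reticulation edges are the reticulation-to-leaf edges
  have hleaf_part : N.ecnt (fun e => ¬ (N.inDeg e.2 = 1 ∧ N.outDeg e.2 = 2) ∧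
      N.inDeg e.1 = 2) =
      N.ecnt (fun e => e.1 ∈ N.V.filter (fun v => N.IsRet v) ∧ N.outDeg e.2 = 0) := by
    apply RawNet.ecnt_congr
    intro e he
    constructor
    · rintro ⟨h1, h2⟩
      refine ⟨Finset.mem_filter.2 ⟨(edge_mem e he).1, h2⟩, ?_⟩
      rcases ret_head e he h2 with h | h
      · exact absurd h h1
      · exact h
    · rintro ⟨h1, h2⟩
      have hr : N.inDeg e.1 = 2 := (Finset.mem_filter.1 h1).2
      exact ⟨by rintro ⟨_, hb⟩; omega, hr⟩
  -- counting the reticulation-to-leaf edges gives r₁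
  have hr1 : N.ecnt (fun e => e.1 ∈ N.V.filter (fun v => N.IsRet v) ∧ N.outDeg e.2 = 0) =
      N.numR1 := by
    rw [N.ecnt_tail_sum']
    have h2 : ∀ v ∈ N.V.filter (fun v => N.IsRet v),
        N.ecnt (fun e => e.1 = v ∧ N.outDeg e.2 = 0) =
        if (∃ w, (v, w) ∈ N.E ∧ N.outDeg w = 0) then 1 else 0 := by
      intro v hv
      obtain ⟨hvV, hdeg⟩ := Finset.mem_filter.1 hv
      have hdeg' : N.inDeg v = 2 := hdeg
      have hout : N.outDeg v = 1 := by
        rcases classify' v hvV with ⟨h, _, _⟩ | ⟨h, _, _⟩ | ⟨h, _⟩ | ⟨_, h⟩ <;> omega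
      split_ifs with hex
      · obtain ⟨w, hwE, hw0⟩ := hex
        have hle : N.ecnt (fun e => e.1 = v ∧ N.outDeg e.2 = 0) ≤ N.outDeg v := by
          rw [← N.ecnt_outDeg v, RawNet.ecnt_card, RawNet.ecnt_card]
          exact Multiset.card_le_card
            (Multiset.monotone_filter_right N.E (fun e he => he.1))
        have hge : 0 < N.ecnt (fun e => e.1 = v ∧ N.outDeg e.2 = 0) := by
          rw [RawNet.ecnt_card]
          exact Multiset.card_pos_iff_exists_mem.2
            ⟨(v, w), Multiset.mem_filter.2 ⟨hwE, rfl, hw0⟩⟩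
        omega
      · rw [RawNet.ecnt_card]
        have h0 : N.E.filter (fun e => e.1 = v ∧ N.outDeg e.2 = 0) = 0 := by
          rw [Multiset.filter_eq_nil]
          rintro e he ⟨h1, h2⟩
          exact hex ⟨e.2, by rw [← h1]; simpa using he, h2⟩
        rw [h0]
        rfl
    rw [Finset.sum_congr rfl h2, ← Finset.card_filter, Finset.filter_filter]
    exact aux_fcard_congr _ _ (fun v _ => Iff.rfl)
  -- rewrite numPureInner as the count of pure inner tree edges
  have aux_fcard_congr_mp : ∀ {p q : ℕ × ℕ → Prop} {hp : DecidablePred p}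
      {hq : DecidablePred q}, (∀ e ∈ N.E, p e ↔ q e) →
      Multiset.card (@Multiset.filter _ p hp N.E) =
        Multiset.card (@Multiset.filter _ q hq N.E) :=
    fun {p q hp hq} h => aux_card_congr hp hq h
  have hP : N.numPureInner = N.ecnt (fun e =>
      (N.inDeg e.1 = 1 ∧ N.outDeg e.1 = 2) ∧ (N.inDeg e.2 = 1 ∧ N.outDeg e.2 = 2)) := by
    apply aux_fcard_congr_mp
    intro e he
    constructor
    · rintro ⟨h1, h2, h3, h4, h5, h6⟩
      constructor
      · rcases classify' e.1 (edge_mem e he).1 with ⟨_, _, h⟩ | ⟨_, h, _⟩ | h | ⟨h, _⟩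
        · exact absurd h h1
        · omega
        · exact h
        · exact absurd h h5
      · rcases classify' e.2 (edge_mem e he).2 with ⟨_, _, h⟩ | ⟨_, h, _⟩ | h | ⟨h, _⟩
        · exact absurd h h2
        · omega
        · exact h
        · exact absurd h h6
    · rintro ⟨⟨ha1, ha2⟩, hb1, hb2⟩
      refine ⟨?_, ?_, by omega, by omega, ?_, ?_⟩
      · intro h
        rw [h, root_in] at ha1
        omega
      · intro h
        rw [h, root_in] at hb1
        omega
      · intro h
        have h' : N.inDeg e.1 = 2 := h
        omega
      · intro h
        have h' : N.inDeg e.2 = 2 := h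
        omega
  -- assemble all equations
  have hEq : n + (N.V.filter (fun v => N.inDeg v = 1 ∧ N.outDeg v = 2)).card +
      2 * (N.V.filter (fun v => N.inDeg v = 2)).card =
      1 + 2 * (N.V.filter (fun v => N.inDeg v = 1 ∧ N.outDeg v = 2)).card +
      (N.V.filter (fun v => N.inDeg v = 2)).card := by
    rw [← hin_eq, ← hout_eq, ← hEin, ← hEout]
  rw [hP]
  rw [hroot_part] at split2
  rw [hnonroot_part] at split2
  rw [hleaf_part, hr1] at split3
  rw [hT_edges] at split1
  rw [hR_edges] at split3
  omega
end
end
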